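/- Let n ≥ 2, let π ∈ ℝⁿ satisfy 1ₙᵀπ = 1, let λ > 0, and let S̄ be an (n−1)×n real matrix such that ‖S̄x‖ ≥ λ‖x‖ for every x ∈ ℝⁿ with 1ₙᵀx = 0. Define w = (Iₙ − π1ₙᵀ)(1ₙ/√n), and let S be the n×n matrix whose first n−1 rows are S̄(Iₙ − π1ₙᵀ) and whose last row is 1ₙᵀ. Then for every x ∈ ℝⁿ, ‖Sx‖² ≥ min(n, λ²) · min(1/2, 1/(16‖w‖² + 1)) · ‖x‖². In particular, S is nonsingular and its smallest singular value is bounded below by a positive constant depending only on n, λ and ‖w‖. -/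

import Mathlib

open Matrix

/-- The Euclidean norm of a vector in `ℝⁿ`. -/
noncomputable def evNorm {n : ℕ} (v : Fin n → ℝ) : ℝ := Real.sqrt (∑ i, v i ^ 2)

lemma evNorm_nonneg {n : ℕ} (v : Fin n → ℝ) : 0 ≤ evNorm v := Real.sqrt_nonneg _

lemma evNorm_sq {n : ℕ} (v : Fin n → ℝ) : evNorm v ^ 2 = ∑ i, v i ^ 2 :=
  Real.sq_sqrt (Finset.sum_nonneg fun _ _ => sq_nonneg _)

lemma evNorm_eq_norm {n : ℕ} (v : Fin n → ℝ) :
    evNorm v = ‖(WithLp.equiv 2 (Fin n → ℝ)).symm v‖ := by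
  rw [EuclideanSpace.norm_eq]
  simp [evNorm, Real.norm_eq_abs, sq_abs]

lemma evNorm_triangle_lower {n : ℕ} (a b : Fin n → ℝ) :
    evNorm a - evNorm b ≤ evNorm (a + b) := by
  simp only [evNorm_eq_norm]
  have : (WithLp.equiv 2 (Fin n → ℝ)).symm (a + b)
      = (WithLp.equiv 2 (Fin n → ℝ)).symm a + (WithLp.equiv 2 (Fin n → ℝ)).symm b := rfl
  rw [this]
  have h := norm_add_le ((WithLp.equiv 2 (Fin n → ℝ)).symm a + (WithLp.equiv 2 (Fin n → ℝ)).symm b)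
    (-(WithLp.equiv 2 (Fin n → ℝ)).symm b)
  simp only [add_neg_cancel_right, norm_neg] at h
  linarith [h]

lemma evNorm_smul {n : ℕ} (s : ℝ) (v : Fin n → ℝ) :
    evNorm (s • v) = |s| * evNorm v := by
  simp only [evNorm_eq_norm]
  have : (WithLp.equiv 2 (Fin n → ℝ)).symm (s • v)
      = s • (WithLp.equiv 2 (Fin n → ℝ)).symm v := rfl
  rw [this, norm_smul, Real.norm_eq_abs]

/-- The core arithmetic inequality. -/
lemma claim5_key_ineq (nn lam nu ny nw t : ℝ) (hn : 2 ≤ nn) (hlam : 0 < lam)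
    (hnu : 0 ≤ nu) (hny : 0 ≤ ny) (hnw : 0 ≤ nw) (ht : 0 ≤ t)
    (htri : ny - t * nw ≤ nu) :
    min nn (lam ^ 2) * min (1 / 2) (1 / (16 * nw ^ 2 + 1)) * (ny ^ 2 + t ^ 2)
      ≤ lam ^ 2 * nu ^ 2 + nn * t ^ 2 := by
  set M := min nn (lam ^ 2) with hM
  set K := min (1 / 2) (1 / (16 * nw ^ 2 + 1)) with hK
  have hD : (0 : ℝ) < 16 * nw ^ 2 + 1 := by positivity
  have hm1 : M ≤ nn := min_le_left _ _
  have hm2 : M ≤ lam ^ 2 := min_le_right _ _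
  have hm0 : 0 ≤ M := le_min (by linarith) (sq_nonneg _)
  have hk1 : K ≤ 1 / 2 := min_le_left _ _
  have hk2 : K ≤ 1 / (16 * nw ^ 2 + 1) := min_le_right _ _
  have hk0 : 0 ≤ K := le_min (by norm_num) (by positivity)
  rcases le_or_gt (4 * (t * nw)) ny with hcase | hcase
  · -- y dominates
    have h1 : 3 / 4 * ny ≤ nu := by nlinarith
    have hMK0 : M * K ≤ M * (1 / 2) := mul_le_mul_of_nonneg_left hk1 hm0
    have hMK : M * K ≤ lam ^ 2 * (1 / 2) := by nlinarith
    have h2a : M * K * ny ^ 2 ≤ lam ^ 2 * (1 / 2) * ny ^ 2 :=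
      mul_le_mul_of_nonneg_right hMK (sq_nonneg ny)
    have hq : (1 / 2) * ny ^ 2 ≤ nu ^ 2 := by
      nlinarith [mul_nonneg (by linarith : (0:ℝ) ≤ nu - 3/4*ny) (by linarith : (0:ℝ) ≤ nu + 3/4*ny)]
    have h2b : lam ^ 2 * ((1 / 2) * ny ^ 2) ≤ lam ^ 2 * nu ^ 2 :=
      mul_le_mul_of_nonneg_left hq (sq_nonneg lam)
    have hMK1 : M * K ≤ nn := by linarith
    have h3 : M * K * t ^ 2 ≤ nn * t ^ 2 := mul_le_mul_of_nonneg_right hMK1 (sq_nonneg t)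
    nlinarith [h2a, h2b, h3]
  · -- c dominates
    have hy2 : ny ^ 2 ≤ 16 * nw ^ 2 * t ^ 2 := by nlinarith
    have hA : ny ^ 2 + t ^ 2 ≤ (16 * nw ^ 2 + 1) * t ^ 2 := by nlinarith
    have h2 : K * (ny ^ 2 + t ^ 2) ≤ 1 / (16 * nw ^ 2 + 1) * ((16 * nw ^ 2 + 1) * t ^ 2) := by
      apply mul_le_mul hk2 hA (by positivity) (by positivity)
    have h3 : 1 / (16 * nw ^ 2 + 1) * ((16 * nw ^ 2 + 1) * t ^ 2) = t ^ 2 := by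
      field_simp
    rw [h3] at h2
    have h4 : M * (K * (ny ^ 2 + t ^ 2)) ≤ M * t ^ 2 := by
      exact mul_le_mul_of_nonneg_left h2 hm0
    have h5 : M * t ^ 2 ≤ nn * t ^ 2 := mul_le_mul_of_nonneg_right hm1 (sq_nonneg t)
    have h6 : 0 ≤ lam ^ 2 * nu ^ 2 := by positivity
    calc M * K * (ny ^ 2 + t ^ 2) = M * (K * (ny ^ 2 + t ^ 2)) := by ring
      _ ≤ M * t ^ 2 := h4
      _ ≤ nn * t ^ 2 := h5
      _ ≤ lam ^ 2 * nu ^ 2 + nn * t ^ 2 := by linarith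

theorem claim5_singular_values_bounded_below {n : ℕ} (hn : 2 ≤ n)
    (π : Fin n → ℝ) (hπ : ∑ i, π i = 1) (lam : ℝ) (hlam : 0 < lam)
    (Sbar : Matrix (Fin (n - 1)) (Fin n) ℝ)
    (hSbar : ∀ x : Fin n → ℝ, ∑ i, x i = 0 → evNorm (Sbar *ᵥ x) ≥ lam * evNorm x) :
    let w : Fin n → ℝ :=
      ((1 - Matrix.of fun i _ => π i : Matrix (Fin n) (Fin n) ℝ)) *ᵥ
        (fun _ => 1 / Real.sqrt n)
    let S : Matrix (Fin n) (Fin n) ℝ := Matrix.of fun i j =>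
      if h : (i : ℕ) < n - 1 then
        ((Sbar * (1 - Matrix.of fun i' _ => π i') :
          Matrix (Fin (n - 1)) (Fin n) ℝ) ⟨i, h⟩ j)
      else 1
    (∀ x : Fin n → ℝ,
      evNorm (S *ᵥ x) ^ 2
        ≥ min (n : ℝ) (lam ^ 2) * min (1 / 2) (1 / (16 * evNorm w ^ 2 + 1))
          * evNorm x ^ 2) ∧ IsUnit S := by
  obtain ⟨m, rfl⟩ : ∃ m, n = m + 1 := ⟨n - 1, by omega⟩
  have hm1 : 1 ≤ m := by omega
  intro w S
  set P : Matrix (Fin (m + 1)) (Fin (m + 1)) ℝ :=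
    (1 - Matrix.of fun i _ => π i) with hPdef
  -- P applied to a vector
  have hP : ∀ (v : Fin (m + 1) → ℝ) (i : Fin (m + 1)),
      (P *ᵥ v) i = v i - π i * ∑ j, v j := by
    intro v i
    rw [hPdef, Matrix.sub_mulVec, Matrix.one_mulVec]
    simp [Matrix.mulVec, dotProduct, Finset.mul_sum]
  have hsumP : ∀ v : Fin (m + 1) → ℝ, ∑ i, (P *ᵥ v) i = 0 := by
    intro v
    simp only [hP]
    rw [Finset.sum_sub_distrib, ← Finset.sum_mul, hπ]
    ring
  have hsum_w : ∑ i, w i = 0 := hsumP _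
  -- positivity of real (m+1)
  have hnpos : (0 : ℝ) < (m + 1 : ℕ) := by positivity
  have hsqrt_pos : (0 : ℝ) < Real.sqrt ((m + 1 : ℕ) : ℝ) := Real.sqrt_pos.2 hnpos
  have hsqrt_sq : Real.sqrt ((m + 1 : ℕ) : ℝ) * Real.sqrt ((m + 1 : ℕ) : ℝ) = ((m + 1 : ℕ) : ℝ) :=
    Real.mul_self_sqrt (le_of_lt hnpos)
  -- the main inequality
  have main : ∀ x : Fin (m + 1) → ℝ,
      evNorm (S *ᵥ x) ^ 2
        ≥ min ((m + 1 : ℕ) : ℝ) (lam ^ 2) * min (1 / 2) (1 / (16 * evNorm w ^ 2 + 1))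
          * evNorm x ^ 2 := by
    intro x
    set c : ℝ := ∑ i, x i with hc
    set u : Fin (m + 1) → ℝ := P *ᵥ x with hu
    set s : ℝ := c / Real.sqrt ((m + 1 : ℕ) : ℝ) with hs
    set y : Fin (m + 1) → ℝ := u - s • w with hy
    have hsum_u : ∑ i, u i = 0 := hsumP _
    -- w i explicitly
    have hw_i : ∀ i, w i = 1 / Real.sqrt ((m + 1 : ℕ) : ℝ)
        - π i * (((m + 1 : ℕ) : ℝ) / Real.sqrt ((m + 1 : ℕ) : ℝ)) := by
      intro i
      show (P *ᵥ fun _ => 1 / Real.sqrt ((m + 1 : ℕ) : ℝ)) i = _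
      rw [hP]
      simp [Finset.sum_div, div_eq_mul_inv]
    -- y i = x i - c / (m+1)
    have hy_i : ∀ i, y i = x i - c / ((m + 1 : ℕ) : ℝ) := by
      intro i
      have hui : u i = x i - π i * c := hP x i
      have e1a : s * (1 / Real.sqrt ((m + 1 : ℕ) : ℝ)) = c / ((m + 1 : ℕ) : ℝ) := by
        rw [hs, div_mul_div_comm, mul_one, hsqrt_sq]
      have e1b : s * (((m + 1 : ℕ) : ℝ) / Real.sqrt ((m + 1 : ℕ) : ℝ)) = c := by
        rw [hs, div_mul_div_comm, hsqrt_sq, mul_div_assoc, div_self (ne_of_gt hnpos), mul_one]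
      have e1 : s * w i = c / ((m + 1 : ℕ) : ℝ) - π i * c := by
        rw [hw_i i, mul_sub, e1a, mul_left_comm s (π i), e1b]
      have : y i = u i - s * w i := rfl
      rw [this, hui, e1]
      ring
    -- sum of y is zero
    have hsum_y : ∑ i, y i = 0 := by
      simp only [hy, Pi.sub_apply, Pi.smul_apply, smul_eq_mul]
      rw [Finset.sum_sub_distrib, hsum_u, ← Finset.mul_sum, hsum_w]
      ring
    -- decomposition of ‖x‖²
    have hnormx : evNorm x ^ 2 = evNorm y ^ 2 + c ^ 2 / ((m + 1 : ℕ) : ℝ) := by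
      rw [evNorm_sq, evNorm_sq]
      have : ∀ i, x i = y i + c / ((m + 1 : ℕ) : ℝ) := by
        intro i; rw [hy_i i]; ring
      calc ∑ i, x i ^ 2 = ∑ i, (y i ^ 2 + 2 * (c / ((m + 1 : ℕ) : ℝ)) * y i
            + (c / ((m + 1 : ℕ) : ℝ)) ^ 2) := by
            apply Finset.sum_congr rfl; intro i _; rw [this i]; ring
        _ = ∑ i, y i ^ 2 + 2 * (c / ((m + 1 : ℕ) : ℝ)) * ∑ i, y i
            + ((m + 1 : ℕ) : ℝ) * (c / ((m + 1 : ℕ) : ℝ)) ^ 2 := by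
            rw [Finset.sum_add_distrib, Finset.sum_add_distrib, ← Finset.mul_sum]
            simp [Finset.card_univ]
        _ = ∑ i, y i ^ 2 + c ^ 2 / ((m + 1 : ℕ) : ℝ) := by
            rw [hsum_y]
            field_simp
            ring
    -- triangle inequality : evNorm y - |s| * evNorm w ≤ evNorm u
    have htri : evNorm y - |s| * evNorm w ≤ evNorm u := by
      have : u = y + s • w := by rw [hy]; abel
      rw [this]
      have h := evNorm_triangle_lower y (s • w)
      rw [evNorm_smul] at h
      exact h
    -- |s|² = c²/(m+1)
    have hs2 : |s| ^ 2 = c ^ 2 / ((m + 1 : ℕ) : ℝ) := by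
      rw [sq_abs, hs, div_pow, Real.sq_sqrt (le_of_lt hnpos)]
    -- splitting ‖Sx‖²
    have hlastrow : (S *ᵥ x) (Fin.last m) = c := by
      show ∑ j, S (Fin.last m) j * x j = c
      rw [hc]
      apply Finset.sum_congr rfl
      intro j _
      have : ¬ ((Fin.last m : ℕ) < m + 1 - 1) := by simp
      show (if h : ((Fin.last m : ℕ)) < m + 1 - 1 then _ else 1) * x j = x j
      rw [dif_neg this, one_mul]
    have hrow : ∀ i : Fin m, (S *ᵥ x) i.castSucc = (Sbar *ᵥ u) ⟨(i : ℕ), by omega⟩ := by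
      intro i
      have h : ((i.castSucc : Fin (m + 1)) : ℕ) < m + 1 - 1 := by
        simp
      show ∑ j, S i.castSucc j * x j = _
      have hterm : ∀ j, S i.castSucc j * x j
          = (Sbar * P) ⟨(i : ℕ), by omega⟩ j * x j := by
        intro j
        show (if h' : ((i.castSucc : Fin (m + 1)) : ℕ) < m + 1 - 1 then
            (Sbar * P) ⟨((i.castSucc : Fin (m + 1)) : ℕ), h'⟩ j else 1) * x j = _
        rw [dif_pos h]
        rfl
      rw [Finset.sum_congr rfl fun j _ => hterm j]
      have : (Sbar * P) *ᵥ x = Sbar *ᵥ u := by rw [hu, Matrix.mulVec_mulVec]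
      exact congrFun this _
    have hsplit : evNorm (S *ᵥ x) ^ 2 = evNorm (Sbar *ᵥ u) ^ 2 + c ^ 2 := by
      rw [evNorm_sq, evNorm_sq, Fin.sum_univ_castSucc, hlastrow]
      congr 1
      rw [show (Finset.univ.sum fun i : Fin (m + 1 - 1) => (Sbar *ᵥ u) i ^ 2)
        = Finset.univ.sum fun i : Fin m => (Sbar *ᵥ u) ⟨(i : ℕ), by omega⟩ ^ 2 from rfl]
      apply Finset.sum_congr rfl
      intro i _
      rw [hrow i]
    -- apply hSbar
    have hSb : evNorm (Sbar *ᵥ u) ≥ lam * evNorm u := hSbar u hsum_u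
    have hSb2 : lam ^ 2 * evNorm u ^ 2 ≤ evNorm (Sbar *ᵥ u) ^ 2 := by
      have h1 : 0 ≤ lam * evNorm u := mul_nonneg (le_of_lt hlam) (evNorm_nonneg u)
      nlinarith [evNorm_nonneg (Sbar *ᵥ u)]
    -- apply the key inequality
    have hkey := claim5_key_ineq ((m + 1 : ℕ) : ℝ) lam (evNorm u) (evNorm y) (evNorm w) (|s|)
      (by exact_mod_cast hn) hlam (evNorm_nonneg u) (evNorm_nonneg y) (evNorm_nonneg w)
      (abs_nonneg s) htri
    rw [hs2] at hkey
    have hlast : ((m + 1 : ℕ) : ℝ) * (c ^ 2 / ((m + 1 : ℕ) : ℝ)) = c ^ 2 := by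
      field_simp
    rw [hlast] at hkey
    rw [hsplit, hnormx]
    linarith
  refine ⟨main, ?_⟩
  -- nonsingularity
  rw [Matrix.isUnit_iff_isUnit_det, isUnit_iff_ne_zero]
  intro hdet
  obtain ⟨v, hv0, hv⟩ := (Matrix.exists_mulVec_eq_zero_iff).2 hdet
  have h1 := main v
  rw [hv] at h1
  have hz : evNorm (0 : Fin (m + 1) → ℝ) = 0 := by simp [evNorm]
  rw [hz] at h1
  have hvpos : 0 < evNorm v ^ 2 := by
    rw [evNorm_sq]
    obtain ⟨i, hi⟩ := Function.ne_iff.1 hv0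
    apply Finset.sum_pos' (fun j _ => sq_nonneg _) ⟨i, Finset.mem_univ i, lt_of_le_of_ne (sq_nonneg _) (Ne.symm (pow_ne_zero 2 hi))⟩
  have hMpos : (0 : ℝ) < min ((m + 1 : ℕ) : ℝ) (lam ^ 2) :=
    lt_min (by positivity) (by positivity)
  have hKpos : (0 : ℝ) < min (1 / 2 : ℝ) (1 / (16 * evNorm w ^ 2 + 1)) :=
    lt_min (by norm_num) (by positivity)
  have h0 : (0 : ℝ) ^ 2 = 0 := by norm_num
  rw [h0] at h1
  have hprod := mul_pos (mul_pos hMpos hKpos) hvpos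
  linarith
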